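/- Let 𝕋 = ℝ/ℤ, let α ∈ 𝕋 be irrational, and let f : 𝕋 → ℝ be continuous such that f(x) = g(x+α) − g(x) for all x ∈ 𝕋, where g : 𝕋 → ℝ is continuous. Define U : 𝕋² → 𝕋² by U(x,y) = (x+α, y + f(x) mod 1). Then for every continuous F : 𝕋² → ℝ and every (x,y) ∈ 𝕋², the Birkhoff averages (1/N) Σ_{n=0}^{N−1} F(U^n(x,y)) converge as N → ∞, with limit ∫_0^1 F(x+t, y + (g(x+t) − g(x)) mod 1) dt. -/

import Mathlib

notation "𝕋" => AddCircle (1 : ℝ)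

instance : Fact ((0 : ℝ) < 1) := ⟨one_pos⟩

open Filter MeasureTheory Finset Topology AddCircle

noncomputable def wavg (α x : 𝕋) (N : ℕ) (h : C(𝕋, ℂ)) : ℂ :=
  (N : ℂ)⁻¹ • ∑ n ∈ Finset.range N, h (x + n • α)

lemma wavg_lip (α x : 𝕋) (N : ℕ) : LipschitzWith 1 (wavg α x N) := by
  apply LipschitzWith.of_dist_le_mul
  intro h h'
  rw [NNReal.coe_one, one_mul, dist_eq_norm, wavg, wavg, ← smul_sub, ← Finset.sum_sub_distrib, norm_smul]
  rcases Nat.eq_zero_or_pos N with hN | hN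
  · simp [hN, dist_nonneg]
  calc ‖(N : ℂ)⁻¹‖ * ‖∑ n ∈ range N, (h (x + n • α) - h' (x + n • α))‖
      ≤ (N : ℝ)⁻¹ * ∑ n ∈ range N, ‖h (x + n • α) - h' (x + n • α)‖ := by
        rw [norm_inv, Complex.norm_natCast]
        gcongr
        exact norm_sum_le _ _
    _ ≤ (N : ℝ)⁻¹ * ∑ n ∈ range N, dist h h' := by
        gcongr with n hn
        rw [← dist_eq_norm]
        exact ContinuousMap.dist_apply_le_dist _
    _ = dist h h' := by
        rw [Finset.sum_const, card_range, nsmul_eq_mul, ← mul_assoc,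
          inv_mul_cancel₀ (by positivity), one_mul]

lemma cont_integrable (h : C(𝕋, ℂ)) : Integrable (fun z => h z) (haarAddCircle (T := 1)) :=
  h.continuous.integrable_of_hasCompactSupport
    (HasCompactSupport.of_compactSpace _)

lemma integral_lip : LipschitzWith 1
    (fun h : C(𝕋, ℂ) => ∫ z, h z ∂(haarAddCircle (T := 1))) := by
  apply LipschitzWith.of_dist_le_mul
  intro h h'
  rw [NNReal.coe_one, one_mul, dist_eq_norm, ← integral_sub (cont_integrable h) (cont_integrable h')]
  calc ‖∫ z, (h z - h' z) ∂haarAddCircle‖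
      ≤ dist h h' * (haarAddCircle (T := 1) Set.univ).toReal := by
        apply norm_integral_le_of_norm_le_const
        filter_upwards with z
        rw [← dist_eq_norm]
        exact ContinuousMap.dist_apply_le_dist _
    _ = dist h h' := by simp

lemma fourier_apply_add (m : ℤ) (a b : 𝕋) :
    fourier m (a + b) = fourier m a * fourier m b := by
  simp_rw [fourier_apply, smul_add, toCircle_add, Circle.coe_mul]

lemma fourier_apply_nsmul (m : ℤ) (x α : 𝕋) (k : ℕ) :
    fourier m (x + k • α) = fourier m x * (fourier m α) ^ k := by
  induction k with
  | zero => simp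
  | succ k ih =>
      rw [succ_nsmul, ← add_assoc, fourier_apply_add, ih, pow_succ, mul_assoc]

lemma fourier_ne_one (α : 𝕋) (hα : ∀ q : ℚ, α ≠ ((q : ℝ) : 𝕋)) {m : ℤ} (hm : m ≠ 0) :
    fourier m α ≠ 1 := by
  obtain ⟨a, rfl⟩ := QuotientAddGroup.mk_surjective α
  intro hz
  rw [fourier_coe_apply, Complex.exp_eq_one_iff] at hz
  obtain ⟨k, hk⟩ := hz
  have hm' : (m : ℂ) ≠ 0 := Int.cast_ne_zero.mpr hm
  have h2 : (2 * (Real.pi : ℂ) * Complex.I) ≠ 0 := by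
    simp [Real.pi_ne_zero, Complex.I_ne_zero]
  have : (m : ℂ) * a = k := by
    field_simp at hk
    have h3 : (2 * (Real.pi : ℂ) * Complex.I) * ((m : ℂ) * a) = (2 * (Real.pi : ℂ) * Complex.I) * k := by
      linear_combination (norm := (push_cast; ring)) (2 * (Real.pi : ℂ) * Complex.I) * hk
    exact mul_left_cancel₀ h2 h3
  have ha : a = (k : ℝ) / m := by
    have : ((m * a : ℝ) : ℂ) = ((k : ℝ) : ℂ) := by push_cast; exact_mod_cast this
    have := Complex.ofReal_inj.mp this
    field_simp
    linarith [this]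
  exact hα ((k : ℚ) / (m : ℚ)) (by rw [ha]; norm_num)

lemma norm_fourier_apply (m : ℤ) (x : 𝕋) : ‖fourier m x‖ = 1 := by
  rw [fourier_apply]
  exact Circle.norm_coe _

lemma integral_fourier_eq_zero {m : ℤ} (hm : m ≠ 0) :
    ∫ z : 𝕋, fourier m z ∂haarAddCircle = 0 :=
  integral_eq_zero_of_add_right_eq_neg (μ := haarAddCircle)
    (fourier_add_half_inv_index hm one_pos)

lemma fourier_tendsto (α : 𝕋) (hα : ∀ q : ℚ, α ≠ ((q : ℝ) : 𝕋)) (x : 𝕋) (m : ℤ) :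
    Tendsto (fun N => wavg α x N (fourier m)) atTop
      (𝓝 (∫ z : 𝕋, fourier m z ∂haarAddCircle)) := by
  rcases eq_or_ne m 0 with rfl | hm
  · have hint : (∫ z : 𝕋, fourier 0 z ∂haarAddCircle) = 1 := by
      simp [fourier_zero]
    rw [hint]
    apply tendsto_const_nhds.congr'
    filter_upwards [eventually_ge_atTop 1] with N hN
    rw [wavg]
    simp only [fourier_zero, Finset.sum_const, card_range, nsmul_eq_mul, mul_one, smul_eq_mul]
    rw [inv_mul_cancel₀ (Nat.cast_ne_zero.mpr (by omega))]
  · rw [integral_fourier_eq_zero hm]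
    set z := fourier m α with hzdef
    have hz1 : z ≠ 1 := fourier_ne_one α hα hm
    have hnorm : ∀ N : ℕ, ‖wavg α x N (fourier m)‖ ≤ (2 / ‖z - 1‖) / N := by
      intro N
      rw [wavg]
      simp_rw [fourier_apply_nsmul, ← Finset.mul_sum, ← hzdef, geom_sum_eq hz1]
      rw [norm_smul, norm_mul, norm_fourier_apply, one_mul, norm_inv,
        Complex.norm_natCast, norm_div]
      have h2 : ‖z ^ N - 1‖ ≤ 2 := by
        calc ‖z ^ N - 1‖ ≤ ‖z ^ N‖ + ‖(1 : ℂ)‖ := norm_sub_le _ _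
          _ = 2 := by
              rw [norm_pow, hzdef, norm_fourier_apply]
              norm_num
      calc (N : ℝ)⁻¹ * (‖z ^ N - 1‖ / ‖z - 1‖) ≤ (N : ℝ)⁻¹ * (2 / ‖z - 1‖) := by gcongr
        _ = 2 / ‖z - 1‖ / N := (inv_mul_eq_div _ _)
    refine squeeze_zero_norm hnorm ?_
    exact tendsto_const_nhds.div_atTop tendsto_natCast_atTop_atTop

lemma weyl_complex (α : 𝕋) (hα : ∀ q : ℚ, α ≠ ((q : ℝ) : 𝕋)) (x : 𝕋) (h : C(𝕋, ℂ)) :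
    Tendsto (fun N => wavg α x N h) atTop
      (𝓝 (∫ z : 𝕋, h z ∂haarAddCircle)) := by
  set S : Set C(𝕋, ℂ) :=
    {h | Tendsto (fun N => wavg α x N h) atTop (𝓝 (∫ z : 𝕋, h z ∂haarAddCircle))} with hS
  have hclosed : IsClosed S := by
    have hequi : Equicontinuous (fun N : ℕ => wavg α x N) := by
      apply UniformEquicontinuous.equicontinuous
      rw [Metric.uniformEquicontinuous_iff]
      intro ε hε
      exact ⟨ε, hε, fun a b hab i =>
        lt_of_le_of_lt (by simpa using (wavg_lip α x i).dist_le_mul a b) hab⟩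
    exact hequi.isClosed_setOf_tendsto integral_lip.continuous
  have hspan : (Submodule.span ℂ (Set.range (fourier (T := 1))) : Set C(𝕋, ℂ)) ⊆ S := by
    intro h' hmem
    induction hmem using Submodule.span_induction with
    | mem u hu =>
        obtain ⟨m, rfl⟩ := hu
        exact fourier_tendsto α hα x m
    | zero =>
        have : ∀ N, wavg α x N 0 = 0 := by intro N; simp [wavg]
        simp only [hS, Set.mem_setOf_eq, this]
        simpa using tendsto_const_nhds
    | add a b ha hb hpa hpb =>
        simp only [hS, Set.mem_setOf_eq] at hpa hpb ⊢
        have heq : ∀ N, wavg α x N (a + b) = wavg α x N a + wavg α x N b := by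
          intro N
          simp only [wavg, ContinuousMap.add_apply, Finset.sum_add_distrib, smul_add]
        have hint : (∫ z : 𝕋, (a + b) z ∂haarAddCircle)
            = (∫ z : 𝕋, a z ∂haarAddCircle) + ∫ z : 𝕋, b z ∂haarAddCircle := by
          simp only [ContinuousMap.add_apply]
          exact integral_add (cont_integrable a) (cont_integrable b)
        rw [hint]
        exact (hpa.add hpb).congr fun N => (heq N).symm
    | smul c a ha hpa =>
        simp only [hS, Set.mem_setOf_eq] at hpa ⊢
        have heq : ∀ N, wavg α x N (c • a) = c • wavg α x N a := by
          intro N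
          simp only [wavg, ContinuousMap.smul_apply, Finset.smul_sum, smul_comm c]
        have hint : (∫ z : 𝕋, (c • a) z ∂haarAddCircle)
            = c • ∫ z : 𝕋, a z ∂haarAddCircle := by
          simp only [ContinuousMap.smul_apply]
          exact integral_smul c _
        rw [hint]
        exact (hpa.const_smul c).congr fun N => (heq N).symm
  have hmem : h ∈ closure (Submodule.span ℂ (Set.range (fourier (T := 1))) : Set C(𝕋, ℂ)) := by
    have htop := span_fourier_closure_eq_top (T := 1)
    have : h ∈ (Submodule.span ℂ (Set.range (fourier (T := 1)))).topologicalClosure := by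
      rw [htop]; trivial
    exact this
  exact closure_minimal hspan hclosed hmem

lemma weyl_real (α : 𝕋) (hα : ∀ q : ℚ, α ≠ ((q : ℝ) : 𝕋)) (x : 𝕋) (h : 𝕋 → ℝ)
    (hh : Continuous h) :
    Tendsto (fun N : ℕ => (1 / (N : ℝ)) * ∑ n ∈ Finset.range N, h (x + n • α)) atTop
      (𝓝 (∫ t in (0 : ℝ)..1, h ((t : ℝ) : 𝕋))) := by
  have hC : Continuous fun z : 𝕋 => (h z : ℂ) := Complex.continuous_ofReal.comp hh
  have hc := weyl_complex α hα x ⟨fun z => (h z : ℂ), hC⟩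
  have hre := (Complex.continuous_re.tendsto _).comp hc
  have hwavg : ∀ N : ℕ, wavg α x N ⟨fun z => (h z : ℂ), hC⟩
      = (((1 / (N : ℝ)) * ∑ n ∈ Finset.range N, h (x + n • α) : ℝ) : ℂ) := by
    intro N
    rw [wavg, smul_eq_mul]
    simp only [ContinuousMap.coe_mk]
    push_cast
    ring
  have hlim : (∫ z : 𝕋, ((h z : ℝ) : ℂ) ∂haarAddCircle).re
      = ∫ t in (0 : ℝ)..1, h ((t : ℝ) : 𝕋) := by
    have h0 : (∫ z : 𝕋, ((h z : ℝ) : ℂ) ∂haarAddCircle)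
        = ((∫ z : 𝕋, h z ∂haarAddCircle : ℝ) : ℂ) := integral_ofReal
    rw [h0, Complex.ofReal_re]
    have h1 : (∫ z : 𝕋, h z) = ∫ z : 𝕋, h z ∂haarAddCircle := by
      rw [volume_eq_smul_haarAddCircle, integral_smul_measure]
      simp
    have h2 := AddCircle.intervalIntegral_preimage 1 0 (fun z : 𝕋 => h z)
    rw [zero_add] at h2
    rw [← h1, ← h2]
  rw [← hlim]
  exact hre.congr fun N => by rw [Function.comp_apply, hwavg, Complex.ofReal_re]

/-- Let `α ∈ 𝕋` be irrational, `g : 𝕋 → ℝ` continuous,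
`f x = g (x + α) - g x`, and `U(x, y) = (x + α, y + (f x mod 1))` on `𝕋²`.  Then for every
continuous `F : 𝕋² → ℝ` and every `(x, y) ∈ 𝕋²` the Birkhoff averages
`(1/N) ∑_{n<N} F(U^n (x,y))` converge, with limit
`∫₀¹ F(x + t, y + (g(x+t) - g(x) mod 1)) dt`. -/
theorem birkhoff_average_of_coboundary_skew
    (α : 𝕋) (hα : ∀ q : ℚ, α ≠ ((q : ℝ) : 𝕋))
    (g : 𝕋 → ℝ) (hg : Continuous g)
    (f : 𝕋 → ℝ) (hf : Continuous f)
    (hcob : ∀ x : 𝕋, f x = g (x + α) - g x)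
    (F : 𝕋 × 𝕋 → ℝ) (hF : Continuous F) (p : 𝕋 × 𝕋) :
    Filter.Tendsto
      (fun N : ℕ => (1 / (N : ℝ)) * ∑ n ∈ Finset.range N,
        F ((fun q : 𝕋 × 𝕋 => (q.1 + α, q.2 + ((f q.1 : ℝ) : 𝕋)))^[n] p))
      Filter.atTop
      (nhds (∫ t in (0 : ℝ)..1,
        F (p.1 + ((t : ℝ) : 𝕋), p.2 + ((g (p.1 + ((t : ℝ) : 𝕋)) - g p.1 : ℝ) : 𝕋)))) := by
  have hiter : ∀ n : ℕ, (fun q : 𝕋 × 𝕋 => (q.1 + α, q.2 + ((f q.1 : ℝ) : 𝕋)))^[n] p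
      = (p.1 + n • α, p.2 + ((g (p.1 + n • α) - g p.1 : ℝ) : 𝕋)) := by
    intro n
    induction n with
    | zero => simp
    | succ n ih =>
        rw [Function.iterate_succ_apply', ih]
        refine Prod.ext ?_ ?_
        · show p.1 + n • α + α = p.1 + (n + 1) • α
          rw [succ_nsmul, add_assoc]
        · show p.2 + ((g (p.1 + n • α) - g p.1 : ℝ) : 𝕋) + ((f (p.1 + n • α) : ℝ) : 𝕋)
              = p.2 + ((g (p.1 + (n + 1) • α) - g p.1 : ℝ) : 𝕋)
          rw [hcob, add_assoc, ← AddCircle.coe_add]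
          have : g (p.1 + n • α) - g p.1 + (g (p.1 + n • α + α) - g (p.1 + n • α))
              = g (p.1 + (n + 1) • α) - g p.1 := by
            rw [succ_nsmul, ← add_assoc]
            ring
          rw [this]
  set h : 𝕋 → ℝ := fun s => F (p.1 + s, p.2 + ((g (p.1 + s) - g p.1 : ℝ) : 𝕋)) with hh_def
  have hcont : Continuous h := by
    apply hF.comp
    refine Continuous.prodMk (continuous_const.add continuous_id) ?_
    refine continuous_const.add ?_
    exact (AddCircle.continuous_mk' 1).comp
      ((hg.comp (continuous_const.add continuous_id)).sub continuous_const)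
  have hw := weyl_real α hα 0 h hcont
  simp only [zero_add] at hw
  refine hw.congr fun N => ?_
  congr 1
  refine Finset.sum_congr rfl fun n _ => ?_
  rw [hiter n]
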